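/- arXiv:2108.05088 — 2 statements merged into one kernel-verified Lean document; each statement's English description precedes it below -/
import Mathlib

section
/- Let m, ρ, l, h_0 > 0 and let h_eq : [-l,l] → ℝ be a constant function with value h ∈ (0, h_0), where m = ρ·2l·(h_0 - h) (Archimedes' principle for a flat-bottomed object). Define M̲ = m + ∫_{-l}^{l} ρx²/h dx and α̲ = (1/(2l)) ∫_{-l}^{l} 1/h dx. If h_0 > 2√(2/3)·l and either h ≥ (h_0 + √(h_0² - 8l²/3))/2 or 0 < h ≤ (h_0 - √(h_0² - 8l²/3))/2, then M̲ - 2ρl³α̲ ≤ 0. -/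
theorem stmt_4 (m ρ l h₀ h : ℝ) (hρ : 0 < ρ) (hl : 0 < l) (hh₀pos : 0 < h₀)
    (hh : 0 < h) (hhh₀ : h < h₀)
    (hm : m = ρ * (2 * l) * (h₀ - h))
    (M α : ℝ)
    (hM : M = m + ∫ x in (-l)..l, ρ * x ^ 2 / h)
    (hα : α = (1 / (2 * l)) * ∫ x in (-l)..l, (1 : ℝ) / h)
    (hh₀ : h₀ > 2 * Real.sqrt (2 / 3) * l)
    (hcase : h ≥ (h₀ + Real.sqrt (h₀ ^ 2 - 8 * l ^ 2 / 3)) / 2 ∨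
             (0 < h ∧ h ≤ (h₀ - Real.sqrt (h₀ ^ 2 - 8 * l ^ 2 / 3)) / 2)) :
    M - 2 * ρ * l ^ 3 * α ≤ 0 := by
  have hI1 : (∫ x in (-l)..l, ρ * x ^ 2 / h) = ρ / h * (2 * l ^ 3 / 3) := by
    have : (∫ x in (-l)..l, ρ * x ^ 2 / h) = ∫ x in (-l)..l, (ρ / h) * x ^ 2 := by
      congr 1; ext x; ring
    rw [this, intervalIntegral.integral_const_mul, integral_pow]
    ring
  have hI2 : (∫ x in (-l)..l, (1 : ℝ) / h) = 2 * l / h := by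
    simp [smul_eq_mul]; ring
  -- key inequality: h^2 - h₀ * h + 2*l^2/3 ≥ 0
  have hd : (0:ℝ) ≤ h₀ ^ 2 - 8 * l ^ 2 / 3 := by
    have hs : Real.sqrt (2/3) ^ 2 = 2/3 := Real.sq_sqrt (by norm_num)
    have h1 : 0 < h₀ - 2 * Real.sqrt (2/3) * l := by linarith
    have h2 : 0 < h₀ + 2 * Real.sqrt (2/3) * l := by
      have := Real.sqrt_nonneg (2/3 : ℝ); nlinarith
    nlinarith [mul_pos h1 h2]
  have hs2 : Real.sqrt (h₀ ^ 2 - 8 * l ^ 2 / 3) ^ 2 = h₀ ^ 2 - 8 * l ^ 2 / 3 :=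
    Real.sq_sqrt hd
  have key : h ^ 2 - h₀ * h + 2 * l ^ 2 / 3 ≥ 0 := by
    rcases hcase with hc | ⟨_, hc⟩
    · nlinarith [Real.sqrt_nonneg (h₀ ^ 2 - 8 * l ^ 2 / 3)]
    · nlinarith [Real.sqrt_nonneg (h₀ ^ 2 - 8 * l ^ 2 / 3)]
  rw [hM, hα, hI1, hI2, hm]
  have hlne : (2 * l) ≠ 0 := by positivity
  field_simp
  nlinarith [mul_pos hρ hl, mul_pos hρ hh, mul_pos (mul_pos hρ hl) hh]
end

section
/- Let H be a Hilbert space, A the generator of a strongly continuous unitary group (T_t) on H, and B ∈ L(ℂ, H). If A has infinitely many eigenvalues on the imaginary axis, the pair (A, B) is not exactly controllable in any finite time τ > 0, i.e. the map Φ_τ : L²([0,τ];ℂ) → H, Φ_τ u = ∫₀^τ T_{τ-s} B u(s) ds, is not surjective. -/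
open scoped ComplexInnerProductSpace in
/-- If the generator of a strongly continuous unitary group has infinitely many
eigenvalues on the imaginary axis (encoded by an orthonormal family of
eigenvectors of the group with distinct frequencies), then the pair (A, B) with
a bounded rank-one control operator B ∈ L(ℂ, H) is not exactly controllable in
any time τ > 0. -/
theorem stmt_11 {H : Type*} [NormedAddCommGroup H] [InnerProductSpace ℂ H]
    [CompleteSpace H]
    (T : ℝ → H →L[ℂ] H)
    (hT0 : T 0 = ContinuousLinearMap.id ℂ H)
    (hTadd : ∀ s t : ℝ, T (s + t) = (T s).comp (T t))
    (hTunitary : ∀ (t : ℝ) (z : H), ‖T t z‖ = ‖z‖)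
    (hTcont : ∀ z : H, Continuous fun t => T t z)
    (B : ℂ →L[ℂ] H)
    -- infinitely many eigenvalues iω_n of the generator on the imaginary axis:
    (ω : ℕ → ℝ) (hωinj : Function.Injective ω)
    (φ : ℕ → H) (hφ : Orthonormal ℂ φ)
    (heig : ∀ (n : ℕ) (t : ℝ),
      T t (φ n) = Complex.exp (Complex.I * (ω n : ℂ) * (t : ℂ)) • φ n) :
    ∀ τ : ℝ, 0 < τ →
      ¬ (∀ z : H, ∃ u : ℝ → ℂ,
        MeasureTheory.MemLp u 2 (MeasureTheory.volume.restrict (Set.Ioc (0:ℝ) τ)) ∧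
        z = ∫ s in (0:ℝ)..τ, T (τ - s) (B (u s))) := by
  intro τ hτ hcontra
  classical
  -- coefficients of `B 1` w.r.t. the orthonormal family
  set b : ℕ → ℂ := fun m => ⟪φ m, B 1⟫ with hbdef
  have hbsum : Summable fun m => ‖b m‖ ^ 2 := hφ.inner_products_summable (B 1)
  have hb0 : Filter.Tendsto (fun m => ‖b m‖) Filter.atTop (nhds 0) := by
    have h := hbsum.tendsto_atTop_zero
    have h2 : Filter.Tendsto (fun m => Real.sqrt (‖b m‖ ^ 2)) Filter.atTop
        (nhds (Real.sqrt 0)) := h.sqrt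
    simpa [Real.sqrt_sq, norm_nonneg] using h2
  -- extract a subsequence along which the coefficients decay fast
  obtain ⟨n, hnmono, hn⟩ := Filter.extraction_forall_of_eventually
    (P := fun k m => ‖b m‖ < (((k : ℝ) + 1) ^ 2)⁻¹)
    (fun k => hb0.eventually_lt_const (by positivity))
  -- the unreachable state
  set c : ℕ → ℂ := fun k => ((((k : ℝ) + 1)⁻¹ : ℝ) : ℂ) with hcdef
  have hcnorm : ∀ k, ‖c k‖ = ((k : ℝ) + 1)⁻¹ := by
    intro k
    show ‖((((k : ℝ) + 1)⁻¹ : ℝ) : ℂ)‖ = ((k : ℝ) + 1)⁻¹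
    rw [Complex.norm_real, Real.norm_eq_abs, abs_of_nonneg (by positivity)]
  have hφn : Orthonormal ℂ (φ ∘ n) := hφ.comp n hnmono.injective
  have hsq : Summable (fun k : ℕ => ‖c k‖ ^ 2) := by
    have h1 : Summable (fun m : ℕ => 1 / (m : ℝ) ^ 2) :=
      Real.summable_one_div_nat_pow.mpr one_lt_two
    have h2 : Summable (fun k : ℕ => 1 / ((k + 1 : ℕ) : ℝ) ^ 2) :=
      (summable_nat_add_iff (f := fun m : ℕ => 1 / (m : ℝ) ^ 2) 1).mpr h1
    refine h2.congr fun k => ?_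
    rw [hcnorm]
    push_cast
    rw [one_div, ← inv_pow]
  have hsum : Summable (fun k => c k • φ (n k)) := by
    have := (hφn.orthogonalFamily.summable_iff_norm_sq_summable c).mpr hsq
    refine this.congr fun k => ?_
    simp [LinearIsometry.toSpanSingleton_apply]
  set z : H := ∑' k, c k • φ (n k) with hzdef
  have hz : HasSum (fun k => c k • φ (n k)) z := hsum.hasSum
  -- inner products of z with the subfamily
  have hinner_z : ∀ j, ⟪φ (n j), z⟫ = c j := by
    intro j
    have h1 : HasSum (fun k => ⟪φ (n j), c k • φ (n k)⟫) ⟪φ (n j), z⟫ :=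
      (innerSL ℂ (φ (n j))).hasSum hz
    have h2 : HasSum (fun k => ⟪φ (n j), c k • φ (n k)⟫) (c j) := by
      have horth := orthonormal_iff_ite.mp hφn
      convert hasSum_ite_eq j (c j) with k
      rw [inner_smul_right]
      have := horth j k
      simp only [Function.comp_apply] at this
      rw [this]
      by_cases hk : k = j
      · subst hk; simp
      · simp [hk, Ne.symm hk]
    exact h1.unique h2
  obtain ⟨u, hu2, hzeq⟩ := hcontra z
  -- integrability of u
  haveI hfin : MeasureTheory.IsFiniteMeasure
      (MeasureTheory.volume.restrict (Set.Ioc (0:ℝ) τ)) :=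
    ⟨by rw [MeasureTheory.Measure.restrict_apply_univ]; exact measure_Ioc_lt_top⟩
  have hu1 : MeasureTheory.Integrable u
      (MeasureTheory.volume.restrict (Set.Ioc (0:ℝ) τ)) :=
    MeasureTheory.memLp_one_iff_integrable.mp
      (hu2.mono_exponent (by norm_num))
  -- rewrite the integrand
  set g : ℝ → H := fun s => T (τ - s) (B 1) with hgdef
  have hgcont : Continuous g := (hTcont (B 1)).comp (continuous_const.sub continuous_id)
  have hgnorm : ∀ s, ‖g s‖ = ‖B 1‖ := fun s => hTunitary _ _
  set F : ℝ → H := fun s => u s • g s with hFdef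
  have hFeq : (fun s => T (τ - s) (B (u s))) = F := by
    funext s
    have hB : B (u s) = u s • B 1 := by rw [← map_smul, smul_eq_mul, mul_one]
    simp [hFdef, hB, hgdef, map_smul]
  have hFion : MeasureTheory.IntegrableOn F (Set.Ioc (0:ℝ) τ) := by
    refine MeasureTheory.Integrable.mono' (hu1.norm.mul_const ‖B 1‖)
      (hu1.aestronglyMeasurable.smul
        (hgcont.aestronglyMeasurable.restrict)) ?_
    filter_upwards with s
    rw [hFdef]
    simp only [norm_smul, hgnorm s]
    exact le_rfl
  have hFint : IntervalIntegrable F MeasureTheory.volume 0 τ :=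
    (intervalIntegrable_iff_integrableOn_Ioc_of_le hτ.le).mpr hFion
  -- unitarity: inner products are preserved
  have hTinner : ∀ (t : ℝ) (x y : H), ⟪T t x, T t y⟫ = ⟪x, y⟫ := by
    intro t x y
    exact (LinearIsometry.mk ((T t).toLinearMap) (hTunitary t)).inner_map_map x y
  have hTinv : ∀ (t : ℝ) (x : H), T t (T (-t) x) = x := by
    intro t x
    have h := hTadd t (-t)
    rw [add_neg_cancel, hT0] at h
    exact congrArg (fun L => L x) h.symm ▸ (by
      have := congrFun (congrArg DFunLike.coe h) x
      simpa using this.symm)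
  -- the key coefficient bound
  have hg_inner : ∀ (m : ℕ) (s : ℝ), ‖⟪φ m, g s⟫‖ = ‖b m‖ := by
    intro m s
    set t : ℝ := τ - s
    have h1 : ⟪φ m, g s⟫ = ⟪T (-t) (φ m), B 1⟫ := by
      conv_lhs => rw [← hTinv t (φ m)]
      rw [hgdef]
      exact hTinner t _ _
    rw [h1, heig m (-t), inner_smul_left]
    rw [norm_mul]
    have habs : ‖(starRingEnd ℂ) (Complex.exp (Complex.I * (ω m : ℂ) * ((-t : ℝ) : ℂ)))‖ = 1 := by
      rw [RCLike.norm_conj, Complex.norm_exp]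
      simp [Complex.mul_re]
    rw [habs, one_mul]
  have key : ∀ m : ℕ, ⟪φ m, z⟫ = ∫ s in (0:ℝ)..τ, ⟪φ m, F s⟫ := by
    intro m
    rw [hzeq, hFeq]
    exact ((innerSL ℂ (φ m)).intervalIntegral_comp_comm hFint).symm
  set C : ℝ := ∫ s in (0:ℝ)..τ, ‖u s‖ with hCdef
  have hC0 : 0 ≤ C :=
    intervalIntegral.integral_nonneg hτ.le (fun s _ => norm_nonneg _)
  have hbound : ∀ m : ℕ, ‖⟪φ m, z⟫‖ ≤ C * ‖b m‖ := by
    intro m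
    rw [key m]
    calc ‖∫ s in (0:ℝ)..τ, ⟪φ m, F s⟫‖
        ≤ ∫ s in (0:ℝ)..τ, ‖⟪φ m, F s⟫‖ :=
          intervalIntegral.norm_integral_le_integral_norm hτ.le
      _ = ∫ s in (0:ℝ)..τ, ‖u s‖ * ‖b m‖ := by
          refine intervalIntegral.integral_congr fun s _ => ?_
          rw [hFdef]
          simp only [inner_smul_right, norm_mul, hg_inner m s]
      _ = C * ‖b m‖ := by rw [hCdef, intervalIntegral.integral_mul_const]
  -- contradiction at k = ⌈C⌉
  set k : ℕ := Nat.ceil C with hkdef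
  have h1 : ((k : ℝ) + 1)⁻¹ ≤ C * (((k : ℝ) + 1) ^ 2)⁻¹ := by
    have h := hbound (n k)
    rw [hinner_z k, hcnorm k] at h
    exact h.trans (mul_le_mul_of_nonneg_left (hn k).le hC0)
  have hk1 : (0 : ℝ) < (k : ℝ) + 1 := by positivity
  have h2 : ((k : ℝ) + 1) ≤ C := by
    have hk2 : (0:ℝ) < ((k:ℝ)+1)^2 := by positivity
    rw [inv_eq_one_div, inv_eq_one_div, mul_one_div, div_le_div_iff₀ hk1 hk2] at h1
    nlinarith
  have h3 : C ≤ (k : ℝ) := Nat.le_ceil C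
  linarith
end
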